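/- Suppose rational numbers x with x^2 ≠ 1 and y satisfy -3y^2 = x^4 + (136/27)x^3 + (122/27)x^2 - (136/27)x + 1. Then u = -2x/(x^2-1), w = -(1+x^2)/(x^2-1), z = 9y/(x^2-1) satisfy the two equations z^2 + 44u^2 - 68u + 27 = 0 and w^2 - (u^2 + 1) = 0. -/

import Mathlib

theorem stmt_9 (x y : ℚ) (hx : x^2 ≠ 1)
    (h : -3*y^2 = x^4 + (136/27)*x^3 + (122/27)*x^2 - (136/27)*x + 1) :
    (9*y/(x^2-1))^2 + 44*(-2*x/(x^2-1))^2 - 68*(-2*x/(x^2-1)) + 27 = 0 ∧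
    (-(1+x^2)/(x^2-1))^2 - ((-2*x/(x^2-1))^2 + 1) = 0 := by
  have hd : x^2 - 1 ≠ 0 := sub_ne_zero.mpr hx
  constructor <;> field_simp
  · linear_combination (-27)*h
  · ring
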